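/- Let R > 0, let Ω = {z ∈ ℂ : |z| < R}, and for z ∈ closure(Ω) set ρ(z) = R − |z|. Let w : closure(Ω) → ℝ be continuous and twice continuously differentiable on Ω, and let k, g : closure(Ω) → ℝ be continuous with k ≥ 4 everywhere, such that Δw − k²·w = g on Ω. Let 0 < γ < γ' < 4 and A ≥ 0 be such that |g(z)| ≤ A·e^{−γ'·ρ(z)} for all z ∈ Ω. Then there exists a constant K > 0, depending only on γ and γ' (and in particular not on R, w, k, g, or A), such that |w(z)| ≤ K·(M + A)·e^{−γ·ρ(z)} for all z ∈ Ω, where M = sup_{z ∈ ∂Ω} |w(z)|. -/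

import Mathlib

/-- Directional derivative of `f : ℂ → E` at `z` in the direction `v ∈ ℂ`. -/
noncomputable def dirDeriv {E : Type*} [NormedAddCommGroup E] [NormedSpace ℝ E]
    (v : ℂ) (f : ℂ → E) (z : ℂ) : E :=
  deriv (fun t : ℝ => f (z + t • v)) 0

/-- The flat Laplacian `Δf = ∂²f/∂x² + ∂²f/∂y²` of a function on `ℂ ≅ ℝ²`
(applied componentwise when the target is `ℂ`). -/
noncomputable def flatLaplacian {E : Type*} [NormedAddCommGroup E] [NormedSpace ℝ E]
    (f : ℂ → E) (z : ℂ) : E :=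
  dirDeriv 1 (dirDeriv 1 f) z + dirDeriv Complex.I (dirDeriv Complex.I f) z
namespace S1
open Complex Metric Set Filter Real
noncomputable def Dv (v : ℂ) (f : ℂ → ℝ) : ℂ → ℝ := fun z => fderiv ℝ f z v
lemma line_hasDerivAt (z v : ℂ) (t : ℝ) : HasDerivAt (fun s : ℝ => z + s • v) v t := by
  simpa using ((hasDerivAt_id t).smul_const v).const_add z
lemma dirDeriv_eq_fderiv {f : ℂ → ℝ} {z : ℂ} (v : ℂ) (hf : DifferentiableAt ℝ f z) :
    dirDeriv v f z = Dv v f z := by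
  have h0 : z + (0:ℝ) • v = z := by simp
  have h := (h0 ▸ hf.hasFDerivAt).comp_hasDerivAt 0 (line_hasDerivAt z v 0)
  simpa [dirDeriv, Dv, h0, Function.comp_def] using h.deriv
lemma Dv_contDiffOn {U : Set ℂ} (hU : IsOpen U) {f : ℂ → ℝ}
    (hf : ContDiffOn ℝ 2 f U) (v : ℂ) : ContDiffOn ℝ 1 (Dv v f) U := by
  have h1 : ContDiffOn ℝ 1 (fderiv ℝ f) U := hf.fderiv_of_isOpen hU (by norm_num)
  exact (ContinuousLinearMap.apply ℝ ℝ v).contDiff.comp_contDiffOn h1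
lemma Dv_differentiableAt {U : Set ℂ} (hU : IsOpen U) {f : ℂ → ℝ}
    (hf : ContDiffOn ℝ 2 f U) (v : ℂ) {z : ℂ} (hz : z ∈ U) :
    DifferentiableAt ℝ (Dv v f) z :=
  (((Dv_contDiffOn hU hf v).differentiableOn one_ne_zero).differentiableAt (hU.mem_nhds hz))
lemma diffAt_of_c2 {U : Set ℂ} (hU : IsOpen U) {f : ℂ → ℝ}
    (hf : ContDiffOn ℝ 2 f U) {z : ℂ} (hz : z ∈ U) : DifferentiableAt ℝ f z :=
  ((hf.differentiableOn (by norm_num)).differentiableAt (hU.mem_nhds hz))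
lemma dirDeriv2_eq {U : Set ℂ} (hU : IsOpen U) {f : ℂ → ℝ}
    (hf : ContDiffOn ℝ 2 f U) {z : ℂ} (hz : z ∈ U) (v : ℂ) :
    dirDeriv v (dirDeriv v f) z = fderiv ℝ (Dv v f) z v := by
  have hev : (fun t : ℝ => dirDeriv v f (z + t • v)) =ᶠ[nhds 0]
      (fun t : ℝ => Dv v f (z + t • v)) := by
    have hcont : Continuous (fun t : ℝ => z + t • v) := by continuity
    have hO : (fun t : ℝ => z + t • v) ⁻¹' U ∈ nhds (0:ℝ) := by
      apply (hU.preimage hcont).mem_nhds; simp [hz]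
    filter_upwards [hO] with t ht
    exact dirDeriv_eq_fderiv v (diffAt_of_c2 hU hf ht)
  have h0 : z + (0:ℝ) • v = z := by simp
  have h := ((h0 ▸ (Dv_differentiableAt hU hf v hz)).hasFDerivAt).comp_hasDerivAt 0
    (line_hasDerivAt z v 0)
  calc dirDeriv v (dirDeriv v f) z = deriv (fun t : ℝ => dirDeriv v f (z + t • v)) 0 := rfl
    _ = deriv (fun t : ℝ => Dv v f (z + t • v)) 0 := hev.deriv_eq
    _ = fderiv ℝ (Dv v f) z v := by simpa [h0, Function.comp_def] using h.deriv
lemma flatLaplacian_eq {U : Set ℂ} (hU : IsOpen U) {f : ℂ → ℝ}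
    (hf : ContDiffOn ℝ 2 f U) {z : ℂ} (hz : z ∈ U) :
    flatLaplacian f z = fderiv ℝ (Dv 1 f) z 1 + fderiv ℝ (Dv Complex.I f) z Complex.I := by
  rw [flatLaplacian, dirDeriv2_eq hU hf hz 1, dirDeriv2_eq hU hf hz Complex.I]

-- second derivative test
lemma second_test {U : Set ℂ} (hU : IsOpen U) {u : ℂ → ℝ} (hu : ContDiffOn ℝ 2 u U)
    {z0 : ℂ} (hz0 : z0 ∈ U) (hmax : IsLocalMax u z0) (v : ℂ) :
    fderiv ℝ (Dv v u) z0 v ≤ 0 := by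
  by_contra hc
  push_neg at hc
  set c := fderiv ℝ (Dv v u) z0 v with hcdef
  have lcont : Continuous (fun t : ℝ => z0 + t • v) := by continuity
  have h0 : z0 + (0:ℝ) • v = z0 := by simp
  have hltd : Filter.Tendsto (fun t : ℝ => z0 + t • v) (nhds 0) (nhds z0) := by
    simpa [h0] using lcont.tendsto 0
  have hχpos : ∀ᶠ t in nhds (0:ℝ), 0 < fderiv ℝ (Dv v u) (z0 + t • v) v := by
    have h1 : ContinuousOn (fderiv ℝ (Dv v u)) U :=
      (Dv_contDiffOn hU hu v).continuousOn_fderiv_of_isOpen hU le_rfl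
    have h2 : ContinuousAt (fderiv ℝ (Dv v u)) z0 := h1.continuousAt (hU.mem_nhds hz0)
    have h3 : Filter.Tendsto (fun t : ℝ => fderiv ℝ (Dv v u) (z0 + t • v) v) (nhds 0)
        (nhds (fderiv ℝ (Dv v u) z0 v)) :=
      (((ContinuousLinearMap.apply ℝ ℝ v).continuous.tendsto _).comp (Filter.Tendsto.comp h2 hltd))
    exact h3.eventually (eventually_gt_nhds hc)
  have hO : ∀ᶠ t in nhds (0:ℝ), z0 + t • v ∈ U :=
    hltd.eventually (hU.mem_nhds hz0)
  have hφmax : ∀ᶠ t in nhds (0:ℝ), u (z0 + t • v) ≤ u z0 := hltd.eventually hmax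
  obtain ⟨ε, hε, hball⟩ := Metric.eventually_nhds_iff.mp (hχpos.and (hO.and hφmax))
  set ε' := ε / 2 with hε'
  have hε'pos : 0 < ε' := by positivity
  have hmem : ∀ t ∈ Set.Icc (0:ℝ) ε', (0 < fderiv ℝ (Dv v u) (z0 + t • v) v ∧
      (z0 + t • v ∈ U ∧ u (z0 + t • v) ≤ u z0)) := by
    intro t ht
    rw [Set.mem_Icc] at ht
    apply hball
    rw [Real.dist_eq, sub_zero, _root_.abs_of_nonneg ht.1]
    linarith [ht.2]
  -- ψ and φ derivatives
  have hφd : ∀ t : ℝ, z0 + t • v ∈ U →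
      HasDerivAt (fun s : ℝ => u (z0 + s • v)) (Dv v u (z0 + t • v)) t := by
    intro t ht
    exact ((diffAt_of_c2 hU hu ht).hasFDerivAt).comp_hasDerivAt t (line_hasDerivAt z0 v t)
  have hψd : ∀ t : ℝ, z0 + t • v ∈ U →
      HasDerivAt (fun s : ℝ => Dv v u (z0 + s • v))
        (fderiv ℝ (Dv v u) (z0 + t • v) v) t := by
    intro t ht
    exact ((Dv_differentiableAt hU hu v ht).hasFDerivAt).comp_hasDerivAt t (line_hasDerivAt z0 v t)
  -- ψ 0 = 0
  have hφlm : IsLocalMax (fun s : ℝ => u (z0 + s • v)) 0 := by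
    unfold IsLocalMax IsMaxFilter
    filter_upwards [hφmax] with t ht
    simpa [h0] using ht
  have hψ0 : Dv v u z0 = 0 := by
    have hd := hφd 0 (by simpa [h0] using hz0)
    have := hφlm.deriv_eq_zero
    rw [hd.deriv] at this
    simpa [h0] using this
  -- ψ strictly increasing on [0,ε']
  have hψmono : StrictMonoOn (fun s : ℝ => Dv v u (z0 + s • v)) (Set.Icc 0 ε') := by
    apply strictMonoOn_of_deriv_pos (convex_Icc 0 ε')
    · intro t ht
      exact ((hψd t (hmem t ht).2.1).differentiableAt).continuousAt.continuousWithinAt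
    · intro t ht
      rw [interior_Icc] at ht
      have ht' : t ∈ Set.Icc (0:ℝ) ε' := ⟨le_of_lt ht.1, le_of_lt ht.2⟩
      rw [(hψd t (hmem t ht').2.1).deriv]
      exact (hmem t ht').1
  have hψpos : ∀ t ∈ Set.Ioc (0:ℝ) ε', 0 < Dv v u (z0 + t • v) := by
    intro t ht
    have := hψmono (Set.left_mem_Icc.mpr (le_of_lt hε'pos)) ⟨le_of_lt ht.1, ht.2⟩ ht.1
    simpa [h0, hψ0] using this
  -- φ strictly increasing on [0,ε']
  have hφmono : StrictMonoOn (fun s : ℝ => u (z0 + s • v)) (Set.Icc 0 ε') := by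
    apply strictMonoOn_of_deriv_pos (convex_Icc 0 ε')
    · intro t ht
      exact ((hφd t (hmem t ht).2.1).differentiableAt).continuousAt.continuousWithinAt
    · intro t ht
      rw [interior_Icc] at ht
      have ht' : t ∈ Set.Icc (0:ℝ) ε' := ⟨le_of_lt ht.1, le_of_lt ht.2⟩
      rw [(hφd t (hmem t ht').2.1).deriv]
      exact hψpos t ⟨ht.1, le_of_lt ht.2⟩
  have h1 := hφmono (Set.left_mem_Icc.mpr (le_of_lt hε'pos))
    (Set.right_mem_Icc.mpr (le_of_lt hε'pos)) hε'pos
  have h2 := (hmem ε' (Set.right_mem_Icc.mpr (le_of_lt hε'pos))).2.2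
  simp only [h0] at h1
  linarith

lemma max_principle {S U : Set ℂ} (hS : IsCompact S) (hSne : S.Nonempty) (hU : IsOpen U)
    (hUS : U ⊆ S) {u : ℂ → ℝ} (hu : ContinuousOn u S) (hu2 : ContDiffOn ℝ 2 u U)
    (hbd : ∀ z ∈ S \ U, u z ≤ 0) (hlap : ∀ z ∈ U, 0 < u z → 0 < flatLaplacian u z) :
    ∀ z ∈ S, u z ≤ 0 := by
  obtain ⟨z0, hz0S, hmax⟩ := hS.exists_isMaxOn hSne hu
  intro z hz
  suffices h : u z0 ≤ 0 by exact le_trans (hmax hz) h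
  by_contra hpos
  push_neg at hpos
  have hz0U : z0 ∈ U := by
    by_contra h
    exact absurd (hbd z0 ⟨hz0S, h⟩) (by linarith)
  have hlm : IsLocalMax u z0 := hmax.isLocalMax (Filter.mem_of_superset (hU.mem_nhds hz0U) hUS)
  have h2 := hlap z0 hz0U hpos
  rw [flatLaplacian_eq hU hu2 hz0U] at h2
  have t1 := second_test hU hu2 hz0U hlm 1
  have t2 := second_test hU hu2 hz0U hlm Complex.I
  linarith

lemma flatLaplacian_comb {U : Set ℂ} (hU : IsOpen U) {w φ : ℂ → ℝ}
    (hw : ContDiffOn ℝ 2 w U) (hφ : ContDiff ℝ 2 φ) (ε : ℝ) {z : ℂ} (hz : z ∈ U) :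
    flatLaplacian (fun x => ε * w x - φ x) z
      = ε * flatLaplacian w z - flatLaplacian φ z := by
  have hφU : ContDiffOn ℝ 2 φ U := hφ.contDiffOn
  have hu : ContDiffOn ℝ 2 (fun x => ε * w x - φ x) U :=
    (contDiffOn_const.mul hw).sub hφU
  have key : ∀ v : ℂ, fderiv ℝ (Dv v (fun x => ε * w x - φ x)) z v
      = ε * fderiv ℝ (Dv v w) z v - fderiv ℝ (Dv v φ) z v := by
    intro v
    have hev : Dv v (fun x => ε * w x - φ x) =ᶠ[nhds z]
        (fun x => ε * Dv v w x - Dv v φ x) := by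
      filter_upwards [hU.mem_nhds hz] with x hx
      have hwx := diffAt_of_c2 hU hw hx
      have hφx := hφ.differentiable (by norm_num) |>.differentiableAt (x := x)
      simp only [Dv]
      rw [fderiv_fun_sub ((differentiableAt_const ε).fun_mul hwx) hφx,
        fderiv_const_mul hwx]
      simp
    rw [Filter.EventuallyEq.fderiv_eq hev]
    have hdw := Dv_differentiableAt hU hw v hz
    have hdφ := Dv_differentiableAt (U := Set.univ) isOpen_univ
      (hφ.contDiffOn) v (Set.mem_univ z)
    rw [fderiv_fun_sub ((differentiableAt_const ε).fun_mul hdw) hdφ, fderiv_const_mul hdw]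
    simp
  rw [flatLaplacian_eq hU hu hz, flatLaplacian_eq hU hw hz,
    flatLaplacian_eq (U := Set.univ) isOpen_univ hφ.contDiffOn (Set.mem_univ z),
    key 1, key Complex.I]
  ring

lemma smul_re (t : ℝ) (v : ℂ) : (t • v).re = t * v.re := by
  simp [Complex.real_smul]
lemma smul_im (t : ℝ) (v : ℂ) : (t • v).im = t * v.im := by
  simp [Complex.real_smul]

/-- Laplacian of a finite sum of exponentials of linear forms. -/
lemma flatLaplacian_expsum {ι : Type*} (s : Finset ι) (c a b : ι → ℝ) (z : ℂ) :
    flatLaplacian (fun z : ℂ => ∑ j ∈ s, c j * Real.exp (a j * z.re + b j * z.im)) z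
      = ∑ j ∈ s, c j * ((a j)^2 + (b j)^2) * Real.exp (a j * z.re + b j * z.im) := by
  have key : ∀ (d : ι → ℝ) (v z : ℂ),
      dirDeriv v (fun z : ℂ => ∑ j ∈ s, d j * Real.exp (a j * z.re + b j * z.im)) z
        = ∑ j ∈ s, (d j * (a j * v.re + b j * v.im)) * Real.exp (a j * z.re + b j * z.im) := by
    intro d v z
    have hline : (fun t : ℝ => ∑ j ∈ s, d j * Real.exp (a j * (z + t • v).re + b j * (z + t • v).im))
        = fun t : ℝ => ∑ j ∈ s, d j * Real.exp ((a j * z.re + b j * z.im)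
            + t * (a j * v.re + b j * v.im)) := by
      funext t
      congr 1
      funext j
      rw [Complex.add_re, Complex.add_im, smul_re, smul_im]
      ring_nf
    have hder : HasDerivAt (fun t : ℝ => ∑ j ∈ s, d j * Real.exp ((a j * z.re + b j * z.im)
        + t * (a j * v.re + b j * v.im)))
        (∑ j ∈ s, (d j * (a j * v.re + b j * v.im)) * Real.exp ((a j * z.re + b j * z.im)
          + 0 * (a j * v.re + b j * v.im))) 0 := by
      apply HasDerivAt.fun_sum
      intro j _
      have h1 : HasDerivAt (fun t : ℝ => (a j * z.re + b j * z.im)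
          + t * (a j * v.re + b j * v.im)) (a j * v.re + b j * v.im) 0 := by
        simpa using ((hasDerivAt_id (0:ℝ)).mul_const (a j * v.re + b j * v.im)).const_add
          (a j * z.re + b j * z.im)
      have h2 := h1.exp
      have h3 := h2.const_mul (d j)
      exact h3.congr_deriv (by ring)
    rw [dirDeriv, hline]
    rw [hder.deriv]
    congr 1
    funext j
    simp
  have k2 : ∀ v : ℂ, dirDeriv v (dirDeriv v
      (fun z : ℂ => ∑ j ∈ s, c j * Real.exp (a j * z.re + b j * z.im))) z
      = ∑ j ∈ s, (c j * (a j * v.re + b j * v.im)^2) * Real.exp (a j * z.re + b j * z.im) := by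
    intro v
    have h1 : dirDeriv v (fun z : ℂ => ∑ j ∈ s, c j * Real.exp (a j * z.re + b j * z.im))
        = fun z => ∑ j ∈ s, (c j * (a j * v.re + b j * v.im))
            * Real.exp (a j * z.re + b j * z.im) := by
      funext z'
      exact key c v z'
    rw [h1, key (fun j => c j * (a j * v.re + b j * v.im)) v z]
    congr 1
    funext j
    ring
  rw [flatLaplacian, k2 1, k2 Complex.I]
  rw [← Finset.sum_add_distrib]
  congr 1
  funext j
  simp [Complex.one_re, Complex.one_im, Complex.I_re, Complex.I_im]
  ring

/-- Laplacian of `c * (x² + y²)^(n+1)`. -/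
lemma flatLaplacian_pow (n : ℕ) (c : ℝ) (z : ℂ) :
    flatLaplacian (fun z : ℂ => c * (z.re^2 + z.im^2)^(n+1)) z
      = c * (4 * (n+1)^2) * (z.re^2 + z.im^2)^n := by
  have key : ∀ (v z : ℂ), dirDeriv v (fun z : ℂ => c * (z.re^2 + z.im^2)^(n+1)) z
      = c * (n+1 : ℝ) * (2 * (z.re * v.re + z.im * v.im)) * (z.re^2 + z.im^2)^n := by
    intro v z
    have hq : HasDerivAt (fun t : ℝ => ((z.re + t * v.re)^2 + (z.im + t * v.im)^2))
        (2 * (z.re * v.re + z.im * v.im)) 0 := by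
      have h1 : HasDerivAt (fun t : ℝ => z.re + t * v.re) v.re 0 := by
        simpa using ((hasDerivAt_id (0:ℝ)).mul_const v.re).const_add z.re
      have h2 : HasDerivAt (fun t : ℝ => z.im + t * v.im) v.im 0 := by
        simpa using ((hasDerivAt_id (0:ℝ)).mul_const v.im).const_add z.im
      have := ((h1.fun_pow 2).fun_add (h2.fun_pow 2))
      exact this.congr_deriv (by simp; ring)
    have hp := (hq.fun_pow (n+1)).const_mul c
    have hline : (fun t : ℝ => c * (((z + t • v).re)^2 + ((z + t • v).im)^2)^(n+1))
        = fun t : ℝ => c * (((z.re + t * v.re))^2 + ((z.im + t * v.im))^2)^(n+1) := by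
      funext t
      rw [Complex.add_re, Complex.add_im, smul_re, smul_im]
    rw [dirDeriv, hline, hp.deriv]
    simp
    ring
  have k2 : ∀ v : ℂ, dirDeriv v (dirDeriv v (fun z : ℂ => c * (z.re^2 + z.im^2)^(n+1))) z
      = c * (n+1 : ℝ) * (2 * (v.re^2 + v.im^2)) * (z.re^2 + z.im^2)^n
        + c * (n+1 : ℝ) * 2 * ((n : ℝ) * (z.re^2 + z.im^2)^(n-1) * (2 * (z.re * v.re + z.im * v.im)))
          * (z.re * v.re + z.im * v.im) := by
    intro v
    have h1 : dirDeriv v (fun z : ℂ => c * (z.re^2 + z.im^2)^(n+1))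
        = fun z : ℂ => c * (n+1 : ℝ) * (2 * (z.re * v.re + z.im * v.im)) * (z.re^2 + z.im^2)^n := by
      funext z'
      exact key v z'
    rw [h1, dirDeriv]
    have hlin : HasDerivAt (fun t : ℝ => z.re + t * v.re) v.re 0 := by
      simpa using ((hasDerivAt_id (0:ℝ)).mul_const v.re).const_add z.re
    have hlin2 : HasDerivAt (fun t : ℝ => z.im + t * v.im) v.im 0 := by
      simpa using ((hasDerivAt_id (0:ℝ)).mul_const v.im).const_add z.im
    have hq : HasDerivAt (fun t : ℝ => ((z.re + t * v.re)^2 + (z.im + t * v.im)^2))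
        (2 * (z.re * v.re + z.im * v.im)) 0 := by
      have := ((hlin.fun_pow 2).fun_add (hlin2.fun_pow 2))
      exact this.congr_deriv (by simp; ring)
    have hL : HasDerivAt (fun t : ℝ => c * (n+1 : ℝ)
        * (2 * ((z.re + t * v.re) * v.re + (z.im + t * v.im) * v.im)))
        (c * (n+1 : ℝ) * (2 * (v.re^2 + v.im^2))) 0 := by
      have h3 := ((hlin.mul_const v.re).fun_add (hlin2.mul_const v.im)).const_mul (2:ℝ)
      have h4 := h3.const_mul (c * (n+1 : ℝ))
      exact h4.congr_deriv (by ring)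
    have hprod := hL.fun_mul (hq.fun_pow n)
    have hline : (fun t : ℝ => c * (n+1 : ℝ)
          * (2 * ((z + t • v).re * v.re + (z + t • v).im * v.im))
          * (((z + t • v).re)^2 + ((z + t • v).im)^2)^n)
        = fun t : ℝ => (c * (n+1 : ℝ)
          * (2 * ((z.re + t * v.re) * v.re + (z.im + t * v.im) * v.im)))
          * (((z.re + t * v.re))^2 + ((z.im + t * v.im))^2)^n := by
      funext t
      rw [Complex.add_re, Complex.add_im, smul_re, smul_im]
    rw [hline, hprod.deriv]
    simp
    ring
  have hsplit : (n : ℝ) * ((z.re^2 + z.im^2)^(n-1) * (z.re^2 + z.im^2))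
      = (n : ℝ) * (z.re^2 + z.im^2)^n := by
    cases n with
    | zero => simp
    | succ m => rw [← pow_succ]; simp
  rw [flatLaplacian, k2 1, k2 Complex.I]
  simp only [Complex.one_re, Complex.one_im, Complex.I_re, Complex.I_im]
  linear_combination (4*c + 4*c*(n:ℝ)) * hsplit


lemma comparison {R : ℝ} {w k g : ℂ → ℝ}
    (hw : ContinuousOn w (Metric.closedBall 0 R)) (hw2 : ContDiffOn ℝ 2 w (Metric.ball 0 R))
    (hk : ∀ z ∈ Metric.closedBall (0:ℂ) R, 4 ≤ k z)
    (hpde : ∀ z ∈ Metric.ball (0:ℂ) R, flatLaplacian w z - k z ^ 2 * w z = g z)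
    {S U : Set ℂ} (hS : IsCompact S) (hSne : S.Nonempty) (hU : IsOpen U) (hUS : U ⊆ S)
    (hSB : S ⊆ Metric.closedBall 0 R) (hUB : U ⊆ Metric.ball 0 R)
    {v : ℂ → ℝ} (hv : ContDiff ℝ 2 v) (hv0 : ∀ z ∈ S, 0 ≤ v z)
    (hsub : ∀ z ∈ U, flatLaplacian v z + |g z| ≤ 16 * v z)
    (hbd : ∀ z ∈ S \ U, |w z| ≤ v z) :
    ∀ z ∈ S, |w z| ≤ v z := by
  have main : ∀ ε : ℝ, ε = 1 ∨ ε = -1 → ∀ z ∈ S, ε * w z - v z ≤ 0 := by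
    intro ε hε
    apply max_principle hS hSne hU hUS
    · exact ((continuousOn_const.mul (hw.mono hSB)).sub hv.continuous.continuousOn)
    · exact ((contDiffOn_const.mul (hw2.mono hUB)).sub hv.contDiffOn)
    · intro z hz
      have h1 := hbd z hz
      have h2 : ε * w z ≤ |w z| := by
        rcases hε with h | h <;> rw [h]
        · simpa using le_abs_self (w z)
        · simpa using neg_le_abs (w z)
      linarith
    · intro z hz hupos
      rw [flatLaplacian_comb hU (hw2.mono hUB) hv ε hz]
      have hpde' := hpde z (hUB hz)
      have hkz := hk z (Metric.ball_subset_closedBall (hUB hz))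
      have h16 : 16 ≤ k z ^ 2 := by nlinarith
      have hsz := hsub z hz
      have hvz := hv0 z (hUS hz)
      have habs1 := le_abs_self (g z)
      have habs2 := neg_abs_le (g z)
      rcases hε with h | h <;> subst h
      · -- w z > v z ≥ 0
        have hwpos : 0 < w z := by linarith
        have : 16 * w z ≤ k z ^ 2 * w z := by nlinarith
        linarith
      · have hwneg : w z < 0 := by linarith
        have : k z ^ 2 * w z ≤ 16 * w z := by nlinarith
        linarith
  intro z hz
  have h1 := main 1 (Or.inl rfl) z hz
  have h2 := main (-1) (Or.inr rfl) z hz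
  rw [abs_le]
  constructor <;> linarith


noncomputable def Tb (β : ℝ) (N : ℕ) (z : ℂ) : ℝ :=
  ∑ j ∈ Finset.range N, Real.exp (β * Real.cos (2*π*j/N) * z.re
    + β * Real.sin (2*π*j/N) * z.im)

lemma Tb_nonneg (β : ℝ) (N : ℕ) (z : ℂ) : 0 ≤ Tb β N z :=
  Finset.sum_nonneg fun j _ => (Real.exp_pos _).le

lemma flatLaplacian_Tb (β : ℝ) (N : ℕ) (c0 : ℝ) (z : ℂ) :
    flatLaplacian (fun z => c0 * Tb β N z) z = β^2 * (c0 * Tb β N z) := by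
  have hfun : (fun z : ℂ => c0 * Tb β N z)
      = fun z : ℂ => ∑ j ∈ Finset.range N,
          c0 * Real.exp ((β * Real.cos (2*π*j/N)) * z.re + (β * Real.sin (2*π*j/N)) * z.im) := by
    funext z'
    rw [Tb, Finset.mul_sum]
  rw [hfun, flatLaplacian_expsum]
  rw [Tb, Finset.mul_sum, Finset.mul_sum]
  congr 1
  funext j
  have : (β * Real.cos (2*π*j/N))^2 + (β * Real.sin (2*π*j/N))^2 = β^2 := by
    have := Real.sin_sq_add_cos_sq (2*π*j/N)
    nlinarith
  rw [this]
  ring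

lemma term_eq (β : ℝ) (z : ℂ) (θ : ℝ) :
    β * Real.cos θ * z.re + β * Real.sin θ * z.im
      = β * ‖z‖ * Real.cos (Complex.arg z - θ) := by
  have hx := Complex.norm_mul_cos_arg z
  have hy := Complex.norm_mul_sin_arg z
  rw [Real.cos_sub, ← hx, ← hy]
  ring

lemma Tb_upper {β : ℝ} (hβ : 0 ≤ β) (N : ℕ) (z : ℂ) :
    Tb β N z ≤ N * Real.exp (β * ‖z‖) := by
  have h : ∀ j ∈ Finset.range N,
      Real.exp (β * Real.cos (2*π*j/N) * z.re + β * Real.sin (2*π*j/N) * z.im)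
        ≤ Real.exp (β * ‖z‖) := by
    intro j _
    rw [Real.exp_le_exp, term_eq]
    have h1 : Real.cos (Complex.arg z - 2*π*j/N) ≤ 1 := Real.cos_le_one _
    have h2 : 0 ≤ β * ‖z‖ := mul_nonneg hβ (norm_nonneg z)
    nlinarith
  calc Tb β N z ≤ ∑ _j ∈ Finset.range N, Real.exp (β * ‖z‖) :=
        Finset.sum_le_sum h
    _ = N * Real.exp (β * ‖z‖) := by
        rw [Finset.sum_const, Finset.card_range]; simp

lemma Tb_lower {β R : ℝ} (hβ : 0 ≤ β) {N : ℕ} (hN : 0 < N) (z : ℂ)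
    (hz : ‖z‖ ≤ R) (hNR : β * R ≤ 2 * (N:ℝ)^2) :
    Real.exp (β * ‖z‖ - π^2) ≤ Tb β N z := by
  set r := ‖z‖ with hr
  set α := Complex.arg z with hα
  set u := α * N / (2*π) with hu
  set i := round u with hi
  set j := (i % (N:ℤ)).toNat with hj
  have hNpos : (0:ℝ) < N := by exact_mod_cast hN
  have hπ : (0:ℝ) < π := Real.pi_pos
  have hjN : j < N := by
    have h1 : i % (N:ℤ) < N := Int.emod_lt_of_pos i (by exact_mod_cast hN)
    have h2 : 0 ≤ i % (N:ℤ) := Int.emod_nonneg i (by positivity)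
    omega
  have hjcast : ((j:ℤ) : ℝ) = ((i % (N:ℤ) : ℤ) : ℝ) := by
    congr 1
    exact_mod_cast Int.toNat_of_nonneg (Int.emod_nonneg i (by positivity))
  -- angle difference
  have hmod : α - 2*π*j/N = (α - 2*π*i/N) + ((i / (N:ℤ) : ℤ) : ℝ) * (2*π) := by
    have hdiv := Int.mul_ediv_add_emod i (N:ℤ)
    have h' : ((N:ℤ) * (i / (N:ℤ)) + i % (N:ℤ) : ℤ) = (i:ℤ) := hdiv
    have hcast : (N:ℝ) * ((i / (N:ℤ) : ℤ) : ℝ) + ((i % (N:ℤ) : ℤ) : ℝ) = (i : ℝ) := by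
      exact_mod_cast h'
    have hq : ((j:ℝ)) = (i:ℝ) - (N:ℝ) * ((i / (N:ℤ) : ℤ) : ℝ) := by
      have : ((j:ℝ)) = ((i % (N:ℤ) : ℤ) : ℝ) := by exact_mod_cast hjcast
      linarith
    rw [hq]
    field_simp
    ring
  have hcos1 : Real.cos (α - 2*π*j/N) = Real.cos (α - 2*π*i/N) := by
    rw [hmod, Real.cos_add_int_mul_two_pi]
  have hround : |α - 2*π*i/N| ≤ π/N := by
    have h1 : |u - i| ≤ 1/2 := abs_sub_round u
    have h2 : α - 2*π*i/N = (2*π/N) * (u - i) := by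
      rw [hu]
      field_simp
    rw [h2, abs_mul, abs_of_pos (by positivity : (0:ℝ) < 2*π/N)]
    calc 2*π/N * |u - i| ≤ 2*π/N * (1/2) := by
          apply mul_le_mul_of_nonneg_left h1 (by positivity)
      _ = π/N := by ring
  have hcos2 : Real.cos (π/N) ≤ Real.cos (α - 2*π*i/N) := by
    rw [← Real.cos_abs (α - 2*π*i/N)]
    apply Real.cos_le_cos_of_nonneg_of_le_pi (abs_nonneg _)
    · rw [div_le_iff₀ hNpos]
      nlinarith [hπ, (by exact_mod_cast hN : (1:ℝ) ≤ N)]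
    · exact hround
  have hcos3 : 1 - π^2/(2*(N:ℝ)^2) ≤ Real.cos (π/N) := by
    have := Real.one_sub_sq_div_two_le_cos (x := π/N)
    have heq : (π/N)^2/2 = π^2/(2*(N:ℝ)^2) := by
      field_simp
    linarith [heq ▸ this]
  -- the single term bound
  have hterm : Real.exp (β * r - π^2)
      ≤ Real.exp (β * Real.cos (2*π*j/N) * z.re + β * Real.sin (2*π*j/N) * z.im) := by
    rw [term_eq, Real.exp_le_exp, ← hr, ← hα, hcos1]
    have hrn : 0 ≤ r := norm_nonneg z
    have hbr : 0 ≤ β * r := mul_nonneg hβ hrn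
    have hchain : 1 - π^2/(2*(N:ℝ)^2) ≤ Real.cos (α - 2*π*i/N) := le_trans hcos3 hcos2
    have h1 : β * r * (1 - π^2/(2*(N:ℝ)^2)) ≤ β * r * Real.cos (α - 2*π*i/N) :=
      mul_le_mul_of_nonneg_left hchain hbr
    have h2 : β * r - π^2 ≤ β * r * (1 - π^2/(2*(N:ℝ)^2)) := by
      have h3 : β * r * (π^2/(2*(N:ℝ)^2)) ≤ π^2 := by
        have h4 : β * r ≤ 2*(N:ℝ)^2 := le_trans (by nlinarith [mul_le_mul_of_nonneg_left hz hβ]) hNR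
        have h5 : 0 < π^2/(2*(N:ℝ)^2) := by positivity
        calc β * r * (π^2/(2*(N:ℝ)^2)) ≤ 2*(N:ℝ)^2 * (π^2/(2*(N:ℝ)^2)) := by
              apply mul_le_mul_of_nonneg_right h4 h5.le
          _ = π^2 := by field_simp
      nlinarith
    linarith
  calc Real.exp (β * r - π^2)
      ≤ Real.exp (β * Real.cos (2*π*j/N) * z.re + β * Real.sin (2*π*j/N) * z.im) := hterm
    _ ≤ Tb β N z := Finset.single_le_sum (f := fun j : ℕ =>
        Real.exp (β * Real.cos (2*π*j/N) * z.re + β * Real.sin (2*π*j/N) * z.im))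
        (fun j _ => (Real.exp_pos _).le) (Finset.mem_range.mpr hjN)


lemma flatLaplacian_const (c : ℝ) (z : ℂ) : flatLaplacian (fun _ : ℂ => c) z = 0 := by
  have h : ∀ (v : ℂ) (c : ℝ), dirDeriv v (fun _ : ℂ => c) = fun _ : ℂ => 0 := by
    intro v c
    funext z'
    simp [dirDeriv]
  simp [flatLaplacian, h]

lemma pow_exp_eq {x : ℝ} (hx : 0 < x) (n : ℕ) : x^n = Real.exp ((n:ℝ) * Real.log x) := by
  rw [← Real.log_pow, Real.exp_log (by positivity)]

lemma pow_ratio_le {r R : ℝ} (hr : 0 < r) (hrR : r ≤ R) {c : ℝ} (hc : 0 ≤ c) {n : ℕ}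
    (hn : c * R ≤ 2*(n:ℝ)) : (r/R)^(2*n) ≤ Real.exp (-(c * (R - r))) := by
  have hR : 0 < R := lt_of_lt_of_le hr hrR
  have hpos : 0 < r/R := by positivity
  rw [pow_exp_eq hpos, Real.exp_le_exp]
  push_cast
  have hlog : Real.log (r/R) ≤ (r - R)/R := by
    have h1 := Real.log_le_sub_one_of_pos hpos
    have h2 : r/R - 1 = (r - R)/R := by field_simp
    linarith
  have h3 : (2*(n:ℝ)) * Real.log (r/R) ≤ (2*(n:ℝ)) * ((r-R)/R) :=
    mul_le_mul_of_nonneg_left hlog (by positivity)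
  have h4 : (2*(n:ℝ)) * ((r-R)/R) ≤ -(c * (R - r)) := by
    rw [mul_div_assoc', div_le_iff₀ hR]
    nlinarith [mul_nonneg (sub_nonneg.mpr hrR) (sub_nonneg.mpr hn)]
  linarith

lemma pow_ratio_ge {θ r R : ℝ} (hθ : 0 < θ) (hθR : θ*R ≤ r) (hR : 0 < R) (hrR : r ≤ R)
    {c : ℝ} (hc : 0 ≤ c) {n : ℕ} (hn : 2*(n:ℝ) ≤ c*θ*R) :
    Real.exp (-(c * (R - r))) ≤ (r/R)^(2*n) := by
  have hrpos : 0 < r := lt_of_lt_of_le (by positivity) hθR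
  have hpos : 0 < r/R := by positivity
  rw [pow_exp_eq hpos, Real.exp_le_exp]
  push_cast
  have hinv : r/R = (R/r)⁻¹ := by rw [inv_div]
  have hlogeq : Real.log (r/R) = - Real.log (R/r) := by rw [hinv, Real.log_inv]
  have hlog : Real.log (R/r) ≤ (R - r)/r := by
    have h1 := Real.log_le_sub_one_of_pos (show (0:ℝ) < R/r by positivity)
    have h2 : R/r - 1 = (R - r)/r := by field_simp
    linarith
  have h3 : (2*(n:ℝ)) * Real.log (R/r) ≤ (2*(n:ℝ)) * ((R-r)/r) :=
    mul_le_mul_of_nonneg_left hlog (by positivity)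
  have h4 : (2*(n:ℝ)) * ((R-r)/r) ≤ c * (R - r) := by
    rw [mul_div_assoc', div_le_iff₀ hrpos]
    have h5 : (0:ℝ) ≤ c*r - 2*(n:ℝ) := by nlinarith [mul_le_mul_of_nonneg_left hθR hc]
    nlinarith [mul_nonneg (sub_nonneg.mpr hrR) h5]
  rw [hlogeq]
  linarith

lemma theta_pow_ge {θ : ℝ} (hθ0 : 0 < θ) (hθ1 : θ ≤ 1) {x : ℝ} {n : ℕ}
    (hn : 2*(n:ℝ) ≤ x + 2) (hx : 0 ≤ x) :
    θ^2 * Real.exp (-(x * (1-θ)/θ)) ≤ θ^(2*n) := by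
  rw [pow_exp_eq hθ0 (2*n), pow_exp_eq hθ0 2]
  rw [← Real.exp_add, Real.exp_le_exp]
  push_cast
  have hlogθ : Real.log θ ≤ 0 := Real.log_nonpos hθ0.le hθ1
  have hlog2 : -((1-θ)/θ) ≤ Real.log θ := by
    have hinv : (θ:ℝ)⁻¹ = 1/θ := (one_div θ).symm
    have h1 := Real.log_le_sub_one_of_pos (show (0:ℝ) < θ⁻¹ by positivity)
    rw [Real.log_inv] at h1
    have h2 : θ⁻¹ - 1 = (1-θ)/θ := by field_simp
    linarith
  have h3 : (2*(n:ℝ)) * Real.log θ ≥ (x + 2) * Real.log θ := by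
    nlinarith [mul_nonneg (sub_nonneg.mpr hn) (neg_nonneg.mpr hlogθ)]
  have h4 : x * Real.log θ ≥ x * (-( (1-θ)/θ)) := mul_le_mul_of_nonneg_left hlog2 hx
  calc (2:ℝ) * Real.log θ + -(x * (1-θ)/θ) ≤ 2 * Real.log θ + x * Real.log θ := by
        have : -(x * (1-θ)/θ) = x * (-((1-θ)/θ)) := by ring
        linarith [this ▸ h4]
    _ = (x + 2) * Real.log θ := by ring
    _ ≤ (2*(n:ℝ)) * Real.log θ := h3

lemma Nceil_bound {η R : ℝ} (hη : 0 < η) (hR : 0 < R) :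
    (Nat.ceil (Real.sqrt (2*R)) : ℝ) * Real.exp (-(η*R)) ≤ Real.exp (1/η) := by
  have h1 : (Nat.ceil (Real.sqrt (2*R)) : ℝ) ≤ Real.sqrt (2*R) + 1 :=
    (Nat.ceil_lt_add_one (Real.sqrt_nonneg _)).le
  have h2 : Real.sqrt (2*R) + 1 ≤ Real.exp (Real.sqrt (2*R)) := Real.add_one_le_exp _
  have hrhs : (0:ℝ) ≤ η*R/2 + 1/η := by positivity
  have hab : (η*R/2) * (1/η) = R/2 := by field_simp
  have hsq : 2*R ≤ (η*R/2 + 1/η)^2 := by nlinarith [sq_nonneg (η*R/2 - 1/η)]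
  have h3 : Real.sqrt (2*R) ≤ η*R/2 + 1/η := by
    calc Real.sqrt (2*R) ≤ Real.sqrt ((η*R/2 + 1/η)^2) := Real.sqrt_le_sqrt hsq
      _ = η*R/2 + 1/η := Real.sqrt_sq hrhs
  calc (Nat.ceil (Real.sqrt (2*R)) : ℝ) * Real.exp (-(η*R))
      ≤ Real.exp (Real.sqrt (2*R)) * Real.exp (-(η*R)) := by
        apply mul_le_mul_of_nonneg_right (le_trans h1 h2) (Real.exp_pos _).le
    _ = Real.exp (Real.sqrt (2*R) - η*R) := by rw [← Real.exp_add]; ring_nf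
    _ ≤ Real.exp (1/η) := by
        rw [Real.exp_le_exp]
        nlinarith [mul_pos hη hR]


lemma sup_facts {R : ℝ} (hR : 0 < R) {w : ℂ → ℝ} (hw : ContinuousOn w (Metric.closedBall 0 R)) :
    (∀ y ∈ Metric.sphere (0:ℂ) R, |w y| ≤ ⨆ y ∈ Metric.sphere (0:ℂ) R, |w y|) ∧
      0 ≤ ⨆ y ∈ Metric.sphere (0:ℂ) R, |w y| := by
  have hsne : (Metric.sphere (0:ℂ) R).Nonempty := NormedSpace.sphere_nonempty.mpr hR.le
  have hcont : ContinuousOn (fun y => |w y|) (Metric.sphere (0:ℂ) R) :=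
    (hw.mono Metric.sphere_subset_closedBall).abs
  obtain ⟨y0, hy0, hymax⟩ := (isCompact_sphere (0:ℂ) R).exists_isMaxOn hsne hcont
  have hub : ∀ y : ℂ, (⨆ _ : y ∈ Metric.sphere (0:ℂ) R, |w y|) ≤ |w y0| := by
    intro y
    by_cases hy : y ∈ Metric.sphere (0:ℂ) R
    · haveI : Nonempty (y ∈ Metric.sphere (0:ℂ) R) := ⟨hy⟩
      rw [ciSup_const]
      exact hymax hy
    · haveI : IsEmpty (y ∈ Metric.sphere (0:ℂ) R) := ⟨hy⟩
      rw [iSup, Set.range_eq_empty, Real.sSup_empty]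
      exact abs_nonneg _
  have hbdd : BddAbove (Set.range fun y : ℂ => ⨆ _ : y ∈ Metric.sphere (0:ℂ) R, |w y|) :=
    ⟨|w y0|, by rintro x ⟨y, rfl⟩; exact hub y⟩
  have key : ∀ y ∈ Metric.sphere (0:ℂ) R, |w y| ≤ ⨆ y ∈ Metric.sphere (0:ℂ) R, |w y| := by
    intro y hy
    haveI : Nonempty (y ∈ Metric.sphere (0:ℂ) R) := ⟨hy⟩
    have h1 : |w y| = ⨆ _ : y ∈ Metric.sphere (0:ℂ) R, |w y| := ciSup_const.symm
    rw [h1]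
    exact le_ciSup hbdd y
  exact ⟨key, le_trans (abs_nonneg _) (key y0 hy0)⟩


end S1

open S1 Real in
set_option maxHeartbeats 2000000 in
theorem statement1 (γ γ' : ℝ) (hγ0 : 0 < γ) (hγγ' : γ < γ') (hγ'4 : γ' < 4) :
    ∃ K > (0 : ℝ), ∀ (R : ℝ), 0 < R →
      ∀ (w k g : ℂ → ℝ) (A : ℝ), 0 ≤ A →
      ContinuousOn w (Metric.closedBall (0 : ℂ) R) →
      ContDiffOn ℝ 2 w (Metric.ball (0 : ℂ) R) →
      ContinuousOn k (Metric.closedBall (0 : ℂ) R) →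
      ContinuousOn g (Metric.closedBall (0 : ℂ) R) →
      (∀ z ∈ Metric.closedBall (0 : ℂ) R, (4 : ℝ) ≤ k z) →
      (∀ z ∈ Metric.ball (0 : ℂ) R, flatLaplacian w z - (k z) ^ 2 * w z = g z) →
      (∀ z ∈ Metric.ball (0 : ℂ) R,
        |g z| ≤ A * Real.exp (-γ' * (R - ‖z‖))) →
      ∀ z ∈ Metric.ball (0 : ℂ) R,
        |w z| ≤ K * ((⨆ y ∈ Metric.sphere (0 : ℂ) R, |w y|) + A)
          * Real.exp (-γ * (R - ‖z‖)) := by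
  have hγ'0 : 0 < γ' := lt_trans hγ0 hγγ'
  obtain ⟨δ, hδdef⟩ : ∃ x : ℝ, x = 16 - γ'^2 := ⟨_, rfl⟩
  have hδ : 0 < δ := by rw [hδdef]; nlinarith
  obtain ⟨θ, hθdef⟩ : ∃ x : ℝ, x = (1 + γ/γ')/2 := ⟨_, rfl⟩
  have hγθ : γ/γ' < 1 := (div_lt_one hγ'0).mpr hγγ'
  have hγγ'0 : 0 < γ/γ' := by positivity
  have hθpos : 0 < θ := by rw [hθdef]; linarith
  have hθ1 : θ < 1 := by rw [hθdef]; linarith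
  have hγ'θ : γ'*θ = (γ'+γ)/2 := by rw [hθdef]; field_simp
  have hγθ' : γ < γ'*θ := by rw [hγ'θ]; linarith
  obtain ⟨η1, hη1def⟩ : ∃ x : ℝ, x = (γ'-γ)*(1-θ) := ⟨_, rfl⟩
  have hη1 : 0 < η1 := by rw [hη1def]; exact mul_pos (by linarith) (by linarith)
  have hγθθ : γ/θ < γ' := (div_lt_iff₀ hθpos).mpr (by linarith [hγθ'])
  have hγθθ0 : 0 < γ/θ := by positivity
  obtain ⟨η3, hη3def⟩ : ∃ x : ℝ, x = (γ' - γ/θ)*(1-θ) := ⟨_, rfl⟩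
  have hη3 : 0 < η3 := by rw [hη3def]; exact mul_pos (by linarith) (by linarith)
  obtain ⟨R0, hR0def⟩ : ∃ x : ℝ, x = 4/(γ'-γ) := ⟨_, rfl⟩
  have hR0pos : 0 < R0 := by rw [hR0def]; exact div_pos (by norm_num) (by linarith)
  obtain ⟨E1, hE1def⟩ : ∃ x : ℝ, x = Real.exp (π^2) * Real.exp (1/η1) := ⟨_, rfl⟩
  obtain ⟨E3, hE3def⟩ : ∃ x : ℝ, x = Real.exp (π^2) * (1/θ^2) * Real.exp (1/η3) := ⟨_, rfl⟩
  have hE1pos : 0 < E1 := by rw [hE1def]; positivity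
  have hE3pos : 0 < E3 := by
    rw [hE3def]
    exact mul_pos (mul_pos (Real.exp_pos _)
      (by rw [one_div]; exact inv_pos.mpr (pow_pos hθpos 2))) (Real.exp_pos _)
  have hδ1pos : (0:ℝ) < 1 + 1/δ := by positivity
  refine ⟨(1+1/δ) * (1 + E3 + E1) + Real.exp (γ*R0) + 1, ?_, ?_⟩
  · nlinarith only [Real.exp_pos (γ*R0), mul_pos hδ1pos
      (show (0:ℝ) < 1 + E3 + E1 by linarith only [hE1pos, hE3pos])]
  obtain ⟨K, hKdef⟩ : ∃ x : ℝ, x = (1+1/δ) * (1 + E3 + E1) + Real.exp (γ*R0) + 1 := ⟨_, rfl⟩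
  rw [← hKdef]
  have hKpos : 0 < K := by
    rw [hKdef]
    nlinarith only [Real.exp_pos (γ*R0), mul_pos hδ1pos
      (show (0:ℝ) < 1 + E3 + E1 by linarith only [hE1pos, hE3pos])]
  have hK1 : Real.exp (γ*R0) ≤ K := by
    rw [hKdef]
    nlinarith only [mul_pos hδ1pos (show (0:ℝ) < 1 + E3 + E1 by linarith only [hE1pos, hE3pos])]
  have hK2 : (1+1/δ) * E1 ≤ K := by
    rw [hKdef]
    nlinarith only [Real.exp_pos (γ*R0), mul_pos hδ1pos (show (0:ℝ) < 1 + E3 by linarith only [hE3pos])]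
  have hK3 : (1+1/δ) * (1 + E3) ≤ K := by
    rw [hKdef]
    nlinarith only [Real.exp_pos (γ*R0), mul_pos hδ1pos hE1pos]
  intro R hR w k g A hA hw hw2 hkc hgc hk4 hpde hgb
  obtain ⟨hM, hM0⟩ := sup_facts hR hw
  obtain ⟨M, hMdef⟩ : ∃ x : ℝ, x = ⨆ y ∈ Metric.sphere (0:ℂ) R, |w y| := ⟨_, rfl⟩
  rw [← hMdef] at hM hM0 ⊢
  have hMA : 0 ≤ M + A := by linarith only [hM0, hA]
  have hMAδ0 : 0 ≤ M + A/δ := by positivity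
  have hMAδle : M + A/δ ≤ (1+1/δ)*(M+A) := by
    have h1 : 0 ≤ M*(1/δ) := mul_nonneg hM0 (by positivity)
    have h2 : A/δ = A*(1/δ) := by ring
    have h3 : (1+1/δ)*(M+A) = M + A + M*(1/δ) + A*(1/δ) := by ring
    linarith only [h1, h2, h3, hA]
  have hball0 : (0:ℂ) ∈ Metric.closedBall (0:ℂ) R := by
    simp [Metric.mem_closedBall]
    linarith only [hR]
  have hmemball : ∀ z : ℂ, z ∈ Metric.ball (0:ℂ) R ↔ ‖z‖ < R := by
    intro z
    simp [Metric.mem_ball, Complex.dist_eq]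
  have hmemcball : ∀ z : ℂ, z ∈ Metric.closedBall (0:ℂ) R ↔ ‖z‖ ≤ R := by
    intro z
    simp [Metric.mem_closedBall, Complex.dist_eq]
  -- Phase 0 : crude bound
  have P0 : ∀ z ∈ Metric.closedBall (0:ℂ) R, |w z| ≤ M + A := by
    apply comparison hw hw2 hk4 hpde (isCompact_closedBall _ _) ⟨0, hball0⟩
      Metric.isOpen_ball Metric.ball_subset_closedBall subset_rfl
      subset_rfl contDiff_const (fun z _ => hMA)
    · intro z hz
      rw [flatLaplacian_const]
      have hzR : ‖z‖ < R := (hmemball z).mp hz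
      have h1 := hgb z hz
      have h2 : Real.exp (-γ' * (R - ‖z‖)) ≤ 1 := by
        rw [Real.exp_le_one_iff]
        nlinarith only [mul_nonneg hγ'0.le (sub_nonneg.mpr hzR.le)]
      linarith only [h1, mul_le_mul_of_nonneg_left h2 hA, hM0, hA]
    · intro z hz
      rw [Metric.closedBall_diff_ball] at hz
      linarith only [hM z hz, hA]
  have hgb' : ∀ y ∈ Metric.ball (0:ℂ) R, |g y| ≤ A * Real.exp (-(γ'*(R - ‖y‖))) := by
    intro y hy
    have := hgb y hy
    rwa [neg_mul] at this
  -- N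
  obtain ⟨N, hNdef⟩ : ∃ x : ℕ, x = Nat.ceil (Real.sqrt (2*R)) := ⟨_, rfl⟩
  have hNpos : 0 < N := by
    rw [hNdef]
    exact Nat.ceil_pos.mpr (Real.sqrt_pos.mpr (by linarith only [hR]))
  have hNsq : 2*R ≤ (N:ℝ)^2 := by
    have h := Nat.le_ceil (Real.sqrt (2*R))
    have h2 : Real.sqrt (2*R) ≤ (N:ℝ) := by rw [hNdef]; exact_mod_cast h
    nlinarith only [Real.sq_sqrt (show (0:ℝ) ≤ 2*R by linarith only [hR]), Real.sqrt_nonneg (2*R), h2]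
  have hNR : γ' * R ≤ 2*(N:ℝ)^2 := by
    nlinarith only [hNsq, mul_nonneg (show (0:ℝ) ≤ 4 - γ' by linarith only [hγ'4]) hR.le]
  -- phase 1 barrier
  obtain ⟨c0, hc0def⟩ : ∃ x : ℝ, x = (M + A/δ) * Real.exp (π^2) * Real.exp (-(γ'*R)) := ⟨_, rfl⟩
  have hc0 : 0 ≤ c0 := by
    rw [hc0def]
    exact mul_nonneg (mul_nonneg hMAδ0 (Real.exp_pos _).le) (Real.exp_pos _).le
  have hv1cd : ContDiff ℝ 2 (fun z : ℂ => c0 * Tb γ' N z) := by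
    apply contDiff_const.mul
    unfold Tb
    apply ContDiff.sum
    intro j _
    apply ContDiff.exp
    exact (contDiff_const.mul Complex.reCLM.contDiff).add
      (contDiff_const.mul Complex.imCLM.contDiff)
  have hTlow : ∀ y : ℂ, ‖y‖ ≤ R →
      (M + A/δ) * Real.exp (-(γ'*(R - ‖y‖))) ≤ c0 * Tb γ' N y := by
    intro y hy
    have h1 := Tb_lower hγ'0.le hNpos y hy hNR
    have h2 : c0 * Real.exp (γ'*‖y‖ - π^2) ≤ c0 * Tb γ' N y :=
      mul_le_mul_of_nonneg_left h1 hc0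
    have h3 : (M + A/δ) * Real.exp (-(γ'*(R - ‖y‖)))
        = c0 * Real.exp (γ'*‖y‖ - π^2) := by
      rw [hc0def, mul_assoc, mul_assoc, ← Real.exp_add, ← Real.exp_add]
      congr 2
      ring
    linarith only [h3 ▸ h2]
  have P1 : ∀ y ∈ Metric.closedBall (0:ℂ) R, |w y| ≤ c0 * Tb γ' N y := by
    apply comparison hw hw2 hk4 hpde (isCompact_closedBall _ _) ⟨0, hball0⟩
      Metric.isOpen_ball Metric.ball_subset_closedBall subset_rfl subset_rfl hv1cd
      (fun y _ => mul_nonneg hc0 (Tb_nonneg _ _ _))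
    · intro y hy
      rw [flatLaplacian_Tb]
      have hyR : ‖y‖ < R := (hmemball y).mp hy
      have h4 := hTlow y hyR.le
      have h5 : A * Real.exp (-(γ'*(R - ‖y‖))) ≤ δ * (c0 * Tb γ' N y) := by
        have h6 : A/δ ≤ M + A/δ := by linarith only [hM0]
        have h7 : A * Real.exp (-(γ'*(R-‖y‖)))
            = δ * ((A/δ) * Real.exp (-(γ'*(R-‖y‖)))) := by
          field_simp
        rw [h7]
        apply mul_le_mul_of_nonneg_left _ hδ.le
        calc (A/δ) * Real.exp (-(γ'*(R-‖y‖)))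
            ≤ (M + A/δ) * Real.exp (-(γ'*(R-‖y‖))) :=
              mul_le_mul_of_nonneg_right h6 (Real.exp_pos _).le
          _ ≤ c0 * Tb γ' N y := h4
      have h8 := hgb' y hy
      rw [hδdef] at h5
      linarith only [h5, h8]
    · intro y hy
      rw [Metric.closedBall_diff_ball] at hy
      have hyR : ‖y‖ = R := by
        have h0 := Metric.mem_sphere.mp hy
        rwa [Complex.dist_eq, sub_zero] at h0
      have h4 := hTlow y hyR.le
      have h5 : (M + A/δ) * Real.exp (-(γ'*(R - ‖y‖))) = M + A/δ := by
        rw [hyR]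
        simp
      have hMz := hM y hy
      have h6 : 0 ≤ A/δ := by positivity
      linarith only [h4, h5, hMz, h6]
  have P1' : ∀ y : ℂ, ‖y‖ ≤ R → c0 * Tb γ' N y
      ≤ (M + A/δ) * Real.exp (π^2) * (N:ℝ) * Real.exp (-(γ'*(R - ‖y‖))) := by
    intro y hy
    have hup := Tb_upper hγ'0.le N y
    have h1 : c0 * Tb γ' N y ≤ c0 * ((N:ℝ) * Real.exp (γ'*‖y‖)) :=
      mul_le_mul_of_nonneg_left hup hc0
    have h2 : c0 * ((N:ℝ) * Real.exp (γ'*‖y‖))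
        = (M + A/δ) * Real.exp (π^2) * (N:ℝ) * Real.exp (-(γ'*(R - ‖y‖))) := by
      rw [hc0def]
      rw [show (M + A/δ) * Real.exp (π^2) * Real.exp (-(γ'*R)) * ((N:ℝ) * Real.exp (γ'*‖y‖))
          = (M + A/δ) * Real.exp (π^2) * (N:ℝ) * (Real.exp (-(γ'*R)) * Real.exp (γ'*‖y‖))
          from by ring, ← Real.exp_add]
      congr 2
      ring
    linarith only [h2 ▸ h1]
  -- main case analysis
  intro z hz
  rw [show -γ * (R - ‖z‖) = -(γ * (R - ‖z‖)) from neg_mul γ _]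
  have hzR : ‖z‖ < R := (hmemball z).mp hz
  have hρ0 : 0 ≤ R - ‖z‖ := by linarith only [hzR]
  have habs0 : 0 ≤ ‖z‖ := norm_nonneg z
  have hexppos : 0 < Real.exp (-(γ*(R - ‖z‖))) := Real.exp_pos _
  by_cases hRR0 : R ≤ R0
  · have h1 := P0 z (Metric.ball_subset_closedBall hz)
    have h2 : (1:ℝ) ≤ Real.exp (γ*R0) * Real.exp (-(γ*(R - ‖z‖))) := by
      rw [← Real.exp_add]
      have h3 : (0:ℝ) ≤ γ*R0 + -(γ*(R - ‖z‖)) := by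
        nlinarith only [mul_nonneg hγ0.le
          (show (0:ℝ) ≤ R0 - (R - ‖z‖) by linarith only [hRR0, habs0])]
      calc (1:ℝ) = Real.exp 0 := Real.exp_zero.symm
        _ ≤ _ := Real.exp_le_exp.mpr h3
    calc |w z| ≤ M + A := h1
      _ = (M+A)*1 := by ring
      _ ≤ (M+A)*(Real.exp (γ*R0) * Real.exp (-(γ*(R - ‖z‖)))) :=
          mul_le_mul_of_nonneg_left h2 hMA
      _ = ((M+A)*Real.exp (γ*R0)) * Real.exp (-(γ*(R - ‖z‖))) := by ring
      _ ≤ K * (M+A) * Real.exp (-(γ*(R - ‖z‖))) := by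
          apply mul_le_mul_of_nonneg_right _ hexppos.le
          calc (M+A)*Real.exp (γ*R0) ≤ (M+A)*K := mul_le_mul_of_nonneg_left hK1 hMA
            _ = K*(M+A) := by ring
  · push_neg at hRR0
    have hwin : γ*R + 2 ≤ γ'*θ*R := by
      have h1 : (γ'-γ)*R0 = 4 := by
        rw [hR0def]
        field_simp [sub_ne_zero.mpr (ne_of_gt hγγ')]
      have h2 : 4 ≤ (γ'-γ)*R := by
        nlinarith only [h1, mul_le_mul_of_nonneg_left hRR0.le
          (show (0:ℝ) ≤ γ'-γ by linarith only [hγγ'])]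
      rw [hγ'θ]
      nlinarith only [h2]
    obtain ⟨n, hndef⟩ : ∃ x : ℕ, x = Nat.ceil (γ*R/2) := ⟨_, rfl⟩
    have hγR2 : 0 < γ*R/2 := by positivity
    have hn0 : 0 < n := by rw [hndef]; exact Nat.ceil_pos.mpr hγR2
    have hn1 : γ*R ≤ 2*(n:ℝ) := by
      have h0 := Nat.le_ceil (γ*R/2)
      have h2 : γ*R/2 ≤ (n:ℝ) := by rw [hndef]; exact_mod_cast h0
      linarith only [h2]
    have hn2 : 2*(n:ℝ) ≤ γ*R + 2 := by
      have h0 := Nat.ceil_lt_add_one hγR2.le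
      have h2 : (n:ℝ) < γ*R/2 + 1 := by rw [hndef]; exact_mod_cast h0
      linarith only [h2]
    have hn3 : 2*(n:ℝ) ≤ γ'*θ*R := le_trans hn2 hwin
    by_cases hzθ : ‖z‖ ≤ θ*R
    · -- far region
      have h1 := le_trans (P1 z (Metric.ball_subset_closedBall hz)) (P1' z hzR.le)
      have hρθ : (1-θ)*R ≤ R - ‖z‖ := by linarith only [hzθ]
      have h2 : Real.exp (-(γ'*(R - ‖z‖)))
          ≤ Real.exp (-(η1*R)) * Real.exp (-(γ*(R - ‖z‖))) := by
        rw [← Real.exp_add, Real.exp_le_exp, hη1def]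
        nlinarith only [mul_le_mul_of_nonneg_left hρθ
          (show (0:ℝ) ≤ γ'-γ by linarith only [hγγ'])]
      have h3 : (N:ℝ) * Real.exp (-(η1*R)) ≤ Real.exp (1/η1) := by
        rw [hNdef]
        exact_mod_cast Nceil_bound hη1 (by linarith only [hR])
      have hC0 : 0 ≤ (M + A/δ) * Real.exp (π^2) := mul_nonneg hMAδ0 (Real.exp_pos _).le
      have step2 : (N:ℝ) * Real.exp (-(γ'*(R - ‖z‖)))
          ≤ ((N:ℝ) * Real.exp (-(η1*R))) * Real.exp (-(γ*(R - ‖z‖))) := by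
        calc (N:ℝ) * Real.exp (-(γ'*(R-‖z‖)))
            ≤ (N:ℝ) * (Real.exp (-(η1*R)) * Real.exp (-(γ*(R - ‖z‖)))) :=
              mul_le_mul_of_nonneg_left h2 (Nat.cast_nonneg N)
          _ = _ := by ring
      have step3 : ((N:ℝ) * Real.exp (-(η1*R))) * Real.exp (-(γ*(R-‖z‖)))
          ≤ Real.exp (1/η1) * Real.exp (-(γ*(R-‖z‖))) :=
        mul_le_mul_of_nonneg_right h3 hexppos.le
      have step4 : |w z| ≤ (M + A/δ) * Real.exp (π^2)
          * (Real.exp (1/η1) * Real.exp (-(γ*(R-‖z‖)))) := by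
        calc |w z| ≤ (M + A/δ) * Real.exp (π^2) * (N:ℝ) * Real.exp (-(γ'*(R - ‖z‖))) := h1
          _ = (M + A/δ) * Real.exp (π^2) * ((N:ℝ) * Real.exp (-(γ'*(R - ‖z‖)))) := by ring
          _ ≤ (M + A/δ) * Real.exp (π^2)
              * (((N:ℝ) * Real.exp (-(η1*R))) * Real.exp (-(γ*(R-‖z‖)))) :=
            mul_le_mul_of_nonneg_left step2 hC0
          _ ≤ _ := mul_le_mul_of_nonneg_left step3 hC0
      have step5 : (M+A/δ)*E1 ≤ K*(M+A) := by
        calc (M+A/δ)*E1 ≤ ((1+1/δ)*(M+A))*E1 := mul_le_mul_of_nonneg_right hMAδle hE1pos.le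
          _ = ((1+1/δ)*E1)*(M+A) := by ring
          _ ≤ K*(M+A) := mul_le_mul_of_nonneg_right hK2 hMA
      calc |w z| ≤ (M + A/δ) * Real.exp (π^2)
            * (Real.exp (1/η1) * Real.exp (-(γ*(R-‖z‖)))) := step4
        _ = ((M+A/δ)*E1)*Real.exp (-(γ*(R-‖z‖))) := by rw [hE1def]; ring
        _ ≤ (K*(M+A))*Real.exp (-(γ*(R-‖z‖))) :=
            mul_le_mul_of_nonneg_right step5 hexppos.le
        _ = K*(M+A)*Real.exp (-(γ*(R-‖z‖))) := by ring
    · -- annulus region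
      push_neg at hzθ
      have hθR0 : 0 < θ*R := mul_pos hθpos hR
      obtain ⟨m, hmn⟩ : ∃ m, n = m + 1 := ⟨n-1, by omega⟩
      obtain ⟨C2, hC2def⟩ : ∃ x : ℝ, x = (M + A/δ)
          + (M + A/δ)*Real.exp (π^2)*(1/θ^2)*(N:ℝ)*Real.exp (-(η3*R)) := ⟨_, rfl⟩
      have hC2aux : 0 ≤ (M + A/δ)*Real.exp (π^2)*(1/θ^2)*(N:ℝ)*Real.exp (-(η3*R)) := by
        apply mul_nonneg (mul_nonneg (mul_nonneg (mul_nonneg hMAδ0 (Real.exp_pos _).le)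
          (by positivity)) (Nat.cast_nonneg N)) (Real.exp_pos _).le
      have hC2nn : 0 ≤ C2 := by rw [hC2def]; linarith only [hC2aux, hMAδ0]
      have hC2geM : M + A/δ ≤ C2 := by rw [hC2def]; linarith only [hC2aux]
      obtain ⟨cc, hccdef⟩ : ∃ x : ℝ, x = C2/((R^2)^n) := ⟨_, rfl⟩
      have hccnn : 0 ≤ cc := by
        rw [hccdef]
        exact div_nonneg hC2nn (pow_nonneg (sq_nonneg R) n)
      have hsq : ∀ y : ℂ, y.re^2 + y.im^2 = (‖y‖)^2 := by
        intro y
        rw [Complex.sq_norm, Complex.normSq_apply]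
        ring
      have hv2eq : ∀ y : ℂ, cc * (y.re^2 + y.im^2)^(m+1) = C2 * ((‖y‖)/R)^(2*n) := by
        intro y
        rw [hsq y, hccdef, ← hmn, div_pow, ← pow_mul, ← pow_mul]
        rw [div_mul_eq_mul_div, mul_div_assoc]
      have hv2cd : ContDiff ℝ 2 (fun y : ℂ => cc * (y.re^2 + y.im^2)^(m+1)) := by
        apply contDiff_const.mul
        exact ((Complex.reCLM.contDiff.pow 2).add (Complex.imCLM.contDiff.pow 2)).pow (m+1)
      have hS2c : IsCompact (Metric.closedBall (0:ℂ) R \ Metric.ball (0:ℂ) (θ*R)) :=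
        (isCompact_closedBall _ _).diff Metric.isOpen_ball
      have hRmem : (R:ℂ) ∈ Metric.closedBall (0:ℂ) R \ Metric.ball (0:ℂ) (θ*R) := by
        constructor
        · simp [Metric.mem_closedBall, Complex.dist_eq, Complex.norm_real, abs_of_pos hR]
        · simp [Metric.mem_ball, Complex.dist_eq, Complex.norm_real, abs_of_pos hR]
          nlinarith only [mul_le_mul_of_nonneg_right hθ1.le hR.le]
      have hU2open : IsOpen (Metric.ball (0:ℂ) R \ Metric.closedBall (0:ℂ) (θ*R)) :=
        Metric.isOpen_ball.sdiff Metric.isClosed_closedBall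
      have hUS2 : Metric.ball (0:ℂ) R \ Metric.closedBall (0:ℂ) (θ*R)
          ⊆ Metric.closedBall (0:ℂ) R \ Metric.ball (0:ℂ) (θ*R) :=
        Set.diff_subset_diff Metric.ball_subset_closedBall Metric.ball_subset_closedBall
      have P2 : ∀ y ∈ Metric.closedBall (0:ℂ) R \ Metric.ball (0:ℂ) (θ*R),
          |w y| ≤ cc * (y.re^2+y.im^2)^(m+1) := by
        apply comparison hw hw2 hk4 hpde hS2c ⟨(R:ℂ), hRmem⟩ hU2open hUS2
          Set.diff_subset Set.diff_subset
          hv2cd (fun y _ => mul_nonneg hccnn (by positivity))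
        · -- subsolution on the open annulus
          intro y hy
          obtain ⟨hy1, hy2⟩ := hy
          have hyR : ‖y‖ < R := (hmemball y).mp hy1
          have hyθ : θ*R < ‖y‖ := by
            by_contra hcon
            push_neg at hcon
            exact hy2 (by simp [Metric.mem_closedBall, Complex.dist_eq]; exact hcon)
          rw [flatLaplacian_pow]
          have hcast : 2*((m:ℝ)+1) = 2*(n:ℝ) := by rw [hmn]; push_cast; ring
          have hstepA : cc*(4*((m:ℝ)+1)^2)*((y.re^2+y.im^2))^m
              ≤ γ'^2*(cc*(y.re^2+y.im^2)^(m+1)) := by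
            have h4m : 4*((m:ℝ)+1)^2 ≤ γ'^2 * (y.re^2+y.im^2) := by
              rw [hsq y]
              have hγ'θR : 0 ≤ γ'*θ*R := by
                apply mul_nonneg (mul_nonneg hγ'0.le hθpos.le) (by linarith)
              have h2na : 0 ≤ 2*(n:ℝ) := by positivity
              have h2n : (2*(n:ℝ))^2 ≤ (γ'*θ*R)^2 := pow_le_pow_left₀ h2na hn3 2
              have hθRa : (θ*R)^2 ≤ ‖y‖^2 := pow_le_pow_left₀ hθR0.le hyθ.le 2
              have hfin : (γ'*θ*R)^2 ≤ γ'^2 * ‖y‖^2 := by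
                calc (γ'*θ*R)^2 = γ'^2 * (θ*R)^2 := by ring
                  _ ≤ γ'^2 * ‖y‖^2 := mul_le_mul_of_nonneg_left hθRa (sq_nonneg γ')
              have hcast2 : (2*((m:ℝ)+1))^2 = (2*(n:ℝ))^2 := by rw [hcast]
              nlinarith only [h2n, hfin, hcast2]
            calc cc*(4*((m:ℝ)+1)^2)*(y.re^2+y.im^2)^m
                ≤ cc*(γ'^2*(y.re^2+y.im^2))*(y.re^2+y.im^2)^m := by
                  apply mul_le_mul_of_nonneg_right
                    (mul_le_mul_of_nonneg_left h4m hccnn) (by positivity)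
              _ = γ'^2*(cc*(y.re^2+y.im^2)^(m+1)) := by rw [pow_succ]; ring
          have hstepB : |g y| ≤ δ*(cc*(y.re^2+y.im^2)^(m+1)) := by
            have hgy := hgb' y hy1
            have hpr := pow_ratio_ge hθpos hyθ.le hR hyR.le hγ'0.le hn3
            have h7 : A * Real.exp (-(γ'*(R - ‖y‖)))
                ≤ δ * (cc*(y.re^2+y.im^2)^(m+1)) := by
              rw [hv2eq y]
              have h8 : A * Real.exp (-(γ'*(R-‖y‖)))
                  = δ*((A/δ) * Real.exp (-(γ'*(R-‖y‖)))) := by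
                field_simp
              rw [h8]
              apply mul_le_mul_of_nonneg_left _ hδ.le
              have h9 : A/δ ≤ C2 := by
                linarith only [hM0, hC2geM]
              exact mul_le_mul h9 hpr (Real.exp_pos _).le hC2nn
            exact le_trans hgy h7
          rw [hδdef] at hstepB
          linarith only [hstepA, hstepB]
        · -- boundary of the annulus
          intro y hy
          obtain ⟨⟨hy1, hy2⟩, hy3⟩ := hy
          have hyR : ‖y‖ ≤ R := (hmemcball y).mp hy1
          have hyθ : θ*R ≤ ‖y‖ := by
            simp only [Metric.mem_ball, Complex.dist_eq, sub_zero, not_lt] at hy2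
            exact hy2
          have hcases : ‖y‖ = R ∨ ‖y‖ = θ*R := by
            have h0 : ¬(y ∈ Metric.ball (0:ℂ) R ∧ y ∉ Metric.closedBall (0:ℂ) (θ*R)) := by
              intro hcon
              exact hy3 ⟨hcon.1, hcon.2⟩
            rcases not_and_or.mp h0 with h1 | h1
            · left
              have h2 : ¬(‖y‖ < R) := fun hcon => h1 ((hmemball y).mpr hcon)
              linarith only [hyR, not_lt.mp h2]
            · right
              push_neg at h1
              simp only [Metric.mem_closedBall, Complex.dist_eq, sub_zero] at h1
              linarith only [h1, hyθ]
          rcases hcases with hcase | hcase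
          · have hy_s : y ∈ Metric.sphere (0:ℂ) R := by
              simp [Metric.mem_sphere, Complex.dist_eq, hcase]
            have h1 := hM y hy_s
            have h2 : cc*(y.re^2+y.im^2)^(m+1) = C2 := by
              rw [hv2eq y, hcase, div_self hR.ne', one_pow, mul_one]
            rw [h2]
            have h6 : 0 ≤ A/δ := by positivity
            linarith only [h1, h6, hC2geM]
          · have h1 := le_trans (P1 y ((hmemcball y).mpr hyR)) (P1' y hyR)
            rw [hcase] at h1
            have hv2y : cc*(y.re^2+y.im^2)^(m+1) = C2 * θ^(2*n) := by
              rw [hv2eq y, hcase, mul_div_assoc, div_self hR.ne', mul_one]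
            rw [hv2y]
            have hθpow : θ^2 * Real.exp (-(γ*R * (1-θ)/θ)) ≤ θ^(2*n) :=
              theta_pow_ge hθpos hθ1.le hn2 (by positivity)
            have hC2ge : (M + A/δ)*Real.exp (π^2)*(1/θ^2)*(N:ℝ)*Real.exp (-(η3*R)) ≤ C2 := by
              rw [hC2def]
              linarith only [hMAδ0]
            have hexpid : Real.exp (-(η3*R)) * (θ^2 * Real.exp (-(γ*R*(1-θ)/θ))) * (1/θ^2)
                = Real.exp (-(γ'*(R-θ*R))) := by
              have hexps : -(η3*R) + -(γ*R*(1-θ)/θ) = -(γ'*(R-θ*R)) := by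
                rw [hη3def]
                field_simp
                ring
              rw [show Real.exp (-(η3*R)) * (θ^2 * Real.exp (-(γ*R*(1-θ)/θ))) * (1/θ^2)
                  = (Real.exp (-(η3*R)) * Real.exp (-(γ*R*(1-θ)/θ))) * (θ^2 * (1/θ^2))
                  from by ring, ← Real.exp_add, hexps]
              rw [show θ^2*(1/θ^2) = 1 from by field_simp, mul_one]
            have hfac0 : 0 ≤ (M + A/δ)*Real.exp (π^2)*(1/θ^2)*(N:ℝ) := by
              apply mul_nonneg (mul_nonneg (mul_nonneg hMAδ0 (Real.exp_pos _).le)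
                (by positivity)) (Nat.cast_nonneg N)
            have hkey : (M+A/δ)*Real.exp (π^2)*(N:ℝ)*Real.exp (-(γ'*(R - θ*R)))
                ≤ C2*θ^(2*n) := by
              calc (M+A/δ)*Real.exp (π^2)*(N:ℝ)*Real.exp (-(γ'*(R - θ*R)))
                  = (M + A/δ)*Real.exp (π^2)*(1/θ^2)*(N:ℝ)
                      * (Real.exp (-(η3*R)) * (θ^2 * Real.exp (-(γ*R*(1-θ)/θ)))) := by
                    rw [show (M + A/δ)*Real.exp (π^2)*(1/θ^2)*(N:ℝ)
                        * (Real.exp (-(η3*R)) * (θ^2 * Real.exp (-(γ*R*(1-θ)/θ))))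
                        = (M + A/δ)*Real.exp (π^2)*(N:ℝ)
                          * (Real.exp (-(η3*R)) * (θ^2 * Real.exp (-(γ*R*(1-θ)/θ))) * (1/θ^2))
                        from by ring, hexpid]
                _ = ((M + A/δ)*Real.exp (π^2)*(1/θ^2)*(N:ℝ)*Real.exp (-(η3*R)))
                      * (θ^2 * Real.exp (-(γ*R*(1-θ)/θ))) := by ring
                _ ≤ C2 * θ^(2*n) := by
                    apply mul_le_mul hC2ge hθpow (by positivity) hC2nn
            exact le_trans h1 hkey
      -- conclude in the annulus
      have hzS2 : z ∈ Metric.closedBall (0:ℂ) R \ Metric.ball (0:ℂ) (θ*R) := by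
        constructor
        · exact Metric.ball_subset_closedBall hz
        · simp only [Metric.mem_ball, Complex.dist_eq, sub_zero, not_lt]
          exact hzθ.le
      have h1 := P2 z hzS2
      have h2 : cc*(z.re^2+z.im^2)^(m+1) ≤ C2 * Real.exp (-(γ*(R - ‖z‖))) := by
        rw [hv2eq z]
        have hpr := pow_ratio_le (show 0 < ‖z‖ from lt_trans hθR0 hzθ)
          hzR.le hγ0.le hn1
        exact mul_le_mul_of_nonneg_left hpr hC2nn
      have h3 : C2 ≤ K*(M+A) := by
        have hN3 : (N:ℝ) * Real.exp (-(η3*R)) ≤ Real.exp (1/η3) := by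
          rw [hNdef]
          exact_mod_cast Nceil_bound hη3 (by linarith only [hR])
        have h4 : (M + A/δ)*Real.exp (π^2)*(1/θ^2)*(N:ℝ)*Real.exp (-(η3*R))
            ≤ (M + A/δ)*E3 := by
          rw [hE3def]
          calc (M + A/δ)*Real.exp (π^2)*(1/θ^2)*(N:ℝ)*Real.exp (-(η3*R))
              = ((M + A/δ)*Real.exp (π^2)*(1/θ^2))*((N:ℝ)*Real.exp (-(η3*R))) := by ring
            _ ≤ ((M + A/δ)*Real.exp (π^2)*(1/θ^2))*Real.exp (1/η3) := by
                apply mul_le_mul_of_nonneg_left hN3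
                apply mul_nonneg (mul_nonneg hMAδ0 (Real.exp_pos _).le) (by positivity)
            _ = (M + A/δ)*(Real.exp (π^2)*(1/θ^2)*Real.exp (1/η3)) := by ring
        have h5 : C2 ≤ (M+A/δ)*(1+E3) := by
          rw [hC2def]
          have hexp2 : (M+A/δ)*(1+E3) = (M+A/δ) + (M+A/δ)*E3 := by ring
          linarith only [h4, hexp2]
        calc C2 ≤ (M+A/δ)*(1+E3) := h5
          _ ≤ ((1+1/δ)*(M+A))*(1+E3) := by
              apply mul_le_mul_of_nonneg_right hMAδle (by linarith only [hE3pos])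
          _ = ((1+1/δ)*(1+E3))*(M+A) := by ring
          _ ≤ K*(M+A) := mul_le_mul_of_nonneg_right hK3 hMA
      calc |w z| ≤ cc*(z.re^2+z.im^2)^(m+1) := h1
        _ ≤ C2 * Real.exp (-(γ*(R - ‖z‖))) := h2
        _ ≤ (K*(M+A)) * Real.exp (-(γ*(R - ‖z‖))) :=
            mul_le_mul_of_nonneg_right h3 hexppos.le
        _ = K*(M+A)*Real.exp (-(γ*(R - ‖z‖))) := by ring
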